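/- arXiv:2104.02448 — 3 statements merged into one kernel-verified Lean document; each statement's English description precedes it below -/
import Mathlib

section
/- With w(i,k) as defined (indices of p, q taken in {1,...,n} and the second argument of w taken modulo n), for all 1 ≤ i, k ≤ n: p_k · w(i,k) − q_k · w(i,k−1) equals p_1⋯p_n − q_1⋯q_n when i = k, and equals 0 when i ≠ k (here w(i,0) is interpreted as w(i,n)). -/
open Finset

lemma prodCons {R : Type*} [CommRing R] (f : ℕ → R) {a b : ℕ} (h : a ≤ b) :
    f a * ∏ j ∈ Icc (a+1) b, f j = ∏ j ∈ Icc a b, f j := by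
  rw [Finset.Icc_add_one_left_eq_Ioc, ← Finset.Ioc_insert_left h,
    Finset.prod_insert (by simp)]

lemma prodTop {R : Type*} [CommRing R] (f : ℕ → R) {a b : ℕ} (hb : 1 ≤ b) (h : a ≤ b) :
    (∏ j ∈ Icc a (b-1), f j) * f b = ∏ j ∈ Icc a b, f j := by
  obtain ⟨c, rfl⟩ : ∃ c, b = c + 1 := ⟨b - 1, by omega⟩
  rw [Finset.prod_Icc_succ_top h]
  simp

lemma prodSplit {R : Type*} [CommRing R] (f : ℕ → R) {k n : ℕ} (hk1 : 1 ≤ k) (hkn : k ≤ n) :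
    ∏ j ∈ Icc 1 n, f j = (∏ j ∈ Icc 1 (k-1), f j) * ∏ j ∈ Icc k n, f j := by
  have h1 : Icc 1 (k-1) = Ioc 0 (k-1) := by rw [← Finset.Icc_add_one_left_eq_Ioc]; rfl
  have h2 : Icc k n = Ioc (k-1) n := by rw [← Finset.Icc_add_one_left_eq_Ioc]; congr 1; omega
  have h3 : Icc 1 n = Ioc 0 n := by rw [← Finset.Icc_add_one_left_eq_Ioc]; rfl
  rw [h1, h2, h3, ← Finset.prod_Ioc_consecutive f (Nat.zero_le (k-1)) (by omega : k - 1 ≤ n)]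

/-- The weight `w(i,k)` of the two-species disordered ASEP. -/
noncomputable def asepWeight {R : Type*} [CommRing R] (p q : ℕ → R) (n i k : ℕ) : R :=
  if i ≤ k then
    (∏ j ∈ Icc 1 (i-1), p j) * (∏ j ∈ Icc (i+1) k, q j) * (∏ j ∈ Icc (k+1) n, p j)
  else
    (∏ j ∈ Icc 1 k, q j) * (∏ j ∈ Icc (k+1) (i-1), p j) * (∏ j ∈ Icc (i+1) n, q j)

theorem stmt_3 {R : Type*} [CommRing R] (n : ℕ) (hn : 1 ≤ n) (p q : ℕ → R)
    (i k : ℕ) (hi : i ∈ Icc 1 n) (hk : k ∈ Icc 1 n) :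
    p k * asepWeight p q n i k - q k * asepWeight p q n i (if k = 1 then n else k - 1) =
      if i = k then (∏ j ∈ Icc 1 n, p j) - (∏ j ∈ Icc 1 n, q j) else 0 := by
  simp only [Finset.mem_Icc] at hi hk
  obtain ⟨hi1, hin⟩ := hi; obtain ⟨hk1, hkn⟩ := hk
  unfold asepWeight
  rcases eq_or_ne i k with rfl | hik
  · rw [if_pos rfl]
    rcases eq_or_ne i 1 with rfl | h1
    · rw [if_pos rfl, if_pos (le_refl 1), if_pos hn]
      rw [Finset.Icc_eq_empty (show ¬ (1:ℕ) ≤ 1-1 by omega),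
        Finset.Icc_eq_empty (show ¬ 1+1 ≤ 1 by omega),
        Finset.Icc_eq_empty (show ¬ n+1 ≤ n by omega)]
      simp only [Finset.prod_empty, one_mul, mul_one]
      rw [← prodCons p hn, ← prodCons q hn]
    · rw [if_neg h1, if_pos (le_refl i), if_neg (show ¬ i ≤ i - 1 by omega)]
      rw [Finset.Icc_eq_empty (show ¬ i+1 ≤ i by omega),
        Finset.Icc_eq_empty (show ¬ i-1+1 ≤ i-1 by omega)]
      simp only [Finset.prod_empty, mul_one]
      rw [prodSplit p hk1 hkn, prodSplit q hk1 hkn, ← prodCons p hkn, ← prodCons q hkn]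
      ring
  · rw [if_neg hik]
    rcases lt_or_gt_of_ne hik with hlt | hgt
    · rw [if_neg (show k ≠ 1 by omega), if_pos (le_of_lt hlt),
        if_pos (show i ≤ k-1 by omega)]
      rw [show k - 1 + 1 = k from by omega,
        ← prodTop q hk1 (show i+1 ≤ k by omega), ← prodCons p hkn]
      ring
    · rw [if_neg (not_le.mpr hgt)]
      rcases eq_or_ne k 1 with rfl | hk1'
      · rw [if_pos rfl, if_pos hin]
        rw [Finset.Icc_eq_empty (show ¬ n+1 ≤ n by omega), Finset.Icc_self,
          Finset.prod_empty, Finset.prod_singleton]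
        rw [← prodCons p (show 1 ≤ i-1 by omega)]
        ring
      · rw [if_neg hk1', if_neg (show ¬ i ≤ k-1 by omega)]
        rw [show k - 1 + 1 = k from by omega,
          ← prodTop q hk1 hk1, ← prodCons p (show k ≤ i-1 by omega)]
        ring
end

section
/- Summing the weight identity of Lemma 'lem:2wts' over i: for each k ∈ {1,...,n}, p_k · W(k) − q_k · W(k−1) = p_1⋯p_n − q_1⋯q_n, where W(k) = Σ_{i=1}^n w(i,k) and W(0) := W(n). -/
open Finset

/-- Column weight `W(k) = Σ_{i=1}^n w(i,k)`. -/
noncomputable def Wcol {R : Type*} [CommRing R] (p q : ℕ → R) (n k : ℕ) : R :=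
  ∑ i ∈ Icc 1 n, asepWeight p q n i k

private lemma Ioc_split {R : Type*} [CommRing R] (f : ℕ → R) {a b c : ℕ}
    (h1 : a ≤ b) (h2 : b ≤ c) :
    (∏ j ∈ Ioc a c, f j) = (∏ j ∈ Ioc a b, f j) * ∏ j ∈ Ioc b c, f j :=
  (Finset.prod_Ioc_consecutive f h1 h2).symm

private lemma Ioc_single {R : Type*} [CommRing R] (f : ℕ → R) {b : ℕ} (h : 1 ≤ b) :
    (∏ j ∈ Ioc (b-1) b, f j) = f b := by
  have hb : Ioc (b-1) b = {b} := by ext x; simp; omega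
  rw [hb, prod_singleton]

private lemma icc_ioc {R : Type*} [CommRing R] (f : ℕ → R) (a b : ℕ) (h : 1 ≤ a) :
    (∏ j ∈ Icc a b, f j) = ∏ j ∈ Ioc (a-1) b, f j := by
  congr 1
  ext x; simp; omega

private lemma key {R : Type*} [CommRing R] (n : ℕ) (p q : ℕ → R) (i k : ℕ)
    (hi : i ∈ Icc 1 n) (hk : k ∈ Icc 1 n) :
    p k * asepWeight p q n i k - q k * asepWeight p q n i (if k = 1 then n else k - 1)
      = if i = k then (∏ j ∈ Icc 1 n, p j) - (∏ j ∈ Icc 1 n, q j) else 0 := by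
  simp only [mem_Icc] at hi hk
  obtain ⟨hi1, hi2⟩ := hi
  obtain ⟨hk1, hk2⟩ := hk
  by_cases hk' : k = 1
  · subst hk'
    rw [show (if (1:ℕ) = 1 then n else 1 - 1) = n from if_pos rfl]
    rcases eq_or_lt_of_le hi1 with h1 | h1
    · -- i = 1 = k
      subst h1
      simp only [asepWeight, if_pos rfl, if_pos hi2, if_pos (le_refl 1)]
      rw [icc_ioc p 1 0 le_rfl, icc_ioc q 2 1 (by omega), icc_ioc p 2 n (by omega),
        icc_ioc q (1+1) n (by omega), icc_ioc p (n+1) n (by omega),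
        icc_ioc p 1 n le_rfl, icc_ioc q 1 n le_rfl]
      simp only [Nat.add_sub_cancel, show (1:ℕ)-1 = 0 from rfl, show (2:ℕ)-1 = 1 from rfl]
      rw [Ioc_split p (show 0 ≤ 1 by omega) hi2, Ioc_split q (show 0 ≤ 1 by omega) hi2]
      rw [show (∏ j ∈ Ioc 0 1, p j) = p 1 from Ioc_single p le_rfl,
        show (∏ j ∈ Ioc 0 1, q j) = q 1 from Ioc_single q le_rfl]
      simp [Ioc_self]
    · -- i ≥ 2, k = 1
      have h2 : ¬ i ≤ 1 := by omega
      have hne : ¬ i = 1 := by omega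
      simp only [asepWeight, if_neg h2, if_pos hi2, if_neg hne]
      rw [icc_ioc q 1 1 le_rfl, icc_ioc p 2 (i-1) (by omega), icc_ioc q (i+1) n (by omega),
        icc_ioc p 1 (i-1) le_rfl, icc_ioc p (n+1) n (by omega)]
      simp only [Nat.add_sub_cancel, show (1:ℕ)-1 = 0 from rfl, show (2:ℕ)-1 = 1 from rfl]
      rw [show (∏ j ∈ Ioc 0 1, q j) = q 1 from Ioc_single q le_rfl]
      rw [Ioc_split p (show 0 ≤ 1 by omega) (show 1 ≤ i-1 by omega)]
      rw [show (∏ j ∈ Ioc 0 1, p j) = p 1 from Ioc_single p le_rfl]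
      simp [Ioc_self]
      ring
  · -- k ≥ 2
    have hk2' : 2 ≤ k := by omega
    simp only [if_neg hk']
    rcases lt_trichotomy i k with h | h | h
    · -- i < k
      have h1 : i ≤ k := le_of_lt h
      have h2 : i ≤ k - 1 := by omega
      have hne : ¬ i = k := by omega
      simp only [asepWeight, if_pos h1, if_pos h2, if_neg hne]
      rw [icc_ioc q (i+1) k (by omega), icc_ioc p (k+1) n (by omega),
        icc_ioc q (i+1) (k-1) (by omega), icc_ioc p (k-1+1) n (by omega)]
      simp only [Nat.add_sub_cancel]
      rw [Ioc_split q (show i ≤ k-1 by omega) (show k-1 ≤ k by omega),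
        Ioc_split p (show k-1 ≤ k by omega) (show k ≤ n by omega),
        Ioc_single q hk1, Ioc_single p hk1]
      ring
    · -- i = k
      subst h
      have h2 : ¬ i ≤ i - 1 := by omega
      simp only [asepWeight, if_pos (le_refl i), if_pos rfl, if_neg h2]
      rw [icc_ioc p 1 (i-1) le_rfl, icc_ioc q (i+1) i (by omega), icc_ioc p (i+1) n (by omega),
        icc_ioc q 1 (i-1) le_rfl, icc_ioc p (i-1+1) (i-1) (by omega),
        icc_ioc q (i+1) n (by omega),
        icc_ioc p 1 n le_rfl, icc_ioc q 1 n le_rfl]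
      simp only [Nat.add_sub_cancel, show (1:ℕ)-1 = 0 from rfl]
      rw [Ioc_split p (show 0 ≤ i-1 by omega) (show i-1 ≤ n by omega),
        Ioc_split p (show i-1 ≤ i by omega) (show i ≤ n by omega),
        Ioc_split q (show 0 ≤ i-1 by omega) (show i-1 ≤ n by omega),
        Ioc_split q (show i-1 ≤ i by omega) (show i ≤ n by omega),
        Ioc_single p hi1, Ioc_single q hi1]
      simp [Ioc_self]
      ring
    · -- i > k
      have h1 : ¬ i ≤ k := by omega
      have h2 : ¬ i ≤ k - 1 := by omega
      have hne : ¬ i = k := by omega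
      simp only [asepWeight, if_neg h1, if_neg h2, if_neg hne]
      rw [icc_ioc q 1 k le_rfl, icc_ioc p (k+1) (i-1) (by omega),
        icc_ioc q 1 (k-1) le_rfl, icc_ioc p (k-1+1) (i-1) (by omega)]
      simp only [Nat.add_sub_cancel, show (1:ℕ)-1 = 0 from rfl]
      rw [Ioc_split q (show 0 ≤ k-1 by omega) (show k-1 ≤ k by omega),
        Ioc_split p (show k-1 ≤ k by omega) (show k ≤ i-1 by omega),
        Ioc_single q hk1, Ioc_single p hk1]
      ring

theorem stmt_12 {R : Type*} [CommRing R] (n : ℕ) (hn : 1 ≤ n) (p q : ℕ → R)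
    (k : ℕ) (hk : k ∈ Icc 1 n) :
    p k * Wcol p q n k - q k * Wcol p q n (if k = 1 then n else k - 1) =
      (∏ j ∈ Icc 1 n, p j) - (∏ j ∈ Icc 1 n, q j) := by
  unfold Wcol
  rw [Finset.mul_sum, Finset.mul_sum, ← Finset.sum_sub_distrib]
  rw [Finset.sum_congr rfl (fun i hi => key n p q i k hi hk)]
  rw [Finset.sum_ite_eq' (Icc 1 n) k]
  simp [hk]
end

section
/- Column sums versus row sums of the weight matrix: Σ_{k=1}^n (p_k·w(i,k) − q_k·w(i,k−1)) = p_1⋯p_n − q_1⋯q_n for every fixed row i ∈ {1,...,n} (with w(i,0) := w(i,n)). -/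
open Finset

private lemma prod_Icc_bot' {R : Type*} [CommRing R] (f : ℕ → R) {a b : ℕ} (h : a ≤ b) :
    ∏ j ∈ Icc a b, f j = f a * ∏ j ∈ Icc (a+1) b, f j := by
  rw [Finset.Icc_add_one_left_eq_Ioc, ← Finset.Ioc_insert_left h, Finset.prod_insert (by simp)]

private lemma prod_Icc_split' {R : Type*} [CommRing R] (f : ℕ → R) {a k b : ℕ}
    (h0 : 1 ≤ a) (ha : a ≤ k) (hb : k ≤ b) :
    ∏ j ∈ Icc a b, f j = (∏ j ∈ Icc a (k-1), f j) * f k * ∏ j ∈ Icc (k+1) b, f j := by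
  have e1 : Icc a b = Ioc (a-1) b := by rw [← Finset.Icc_add_one_left_eq_Ioc]; congr 1; omega
  have e2 : Icc a (k-1) = Ioc (a-1) (k-1) := by rw [← Finset.Icc_add_one_left_eq_Ioc]; congr 1; omega
  have e3 : Icc k b = Ioc (k-1) b := by rw [← Finset.Icc_add_one_left_eq_Ioc]; congr 1; omega
  rw [e1, ← Finset.prod_Ioc_consecutive f (show a-1 ≤ k-1 by omega) (show k-1 ≤ b by omega),
    ← e2, ← e3, prod_Icc_bot' f (show k ≤ b from hb), mul_assoc]

theorem stmt_19 {R : Type*} [CommRing R] (n : ℕ) (hn : 1 ≤ n) (p q : ℕ → R)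
    (i : ℕ) (hi : i ∈ Icc 1 n) :
    (∑ k ∈ Icc 1 n,
        (p k * asepWeight p q n i k -
          q k * asepWeight p q n i (if k = 1 then n else k - 1))) =
      (∏ j ∈ Icc 1 n, p j) - (∏ j ∈ Icc 1 n, q j) := by
  simp only [mem_Icc] at hi
  obtain ⟨hi1, hin⟩ := hi
  rw [Finset.sum_eq_single_of_mem i (by simp only [mem_Icc]; omega)]
  · unfold asepWeight
    by_cases h1 : i = 1
    · subst h1
      rw [if_pos rfl, if_pos le_rfl, if_pos hn,
        show Icc 1 0 = (∅ : Finset ℕ) from rfl,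
        Finset.Icc_eq_empty (show ¬ (1+1) ≤ 1 by omega),
        Finset.Icc_eq_empty (show ¬ n+1 ≤ n by omega),
        prod_Icc_bot' p hn, prod_Icc_bot' q hn]
      simp only [Finset.prod_empty, Finset.prod_singleton, one_mul, mul_one]
      try ring
    · rw [if_neg h1, if_pos le_rfl, if_neg (show ¬ i ≤ i - 1 by omega),
        show i - 1 + 1 = i from by omega,
        Finset.Icc_eq_empty (show ¬ i+1 ≤ i by omega),
        Finset.Icc_eq_empty (show ¬ i ≤ i-1 by omega),
        prod_Icc_split' p (le_refl 1) hi1 hin, prod_Icc_split' q (le_refl 1) hi1 hin]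
      simp only [Finset.prod_empty, Finset.prod_singleton, one_mul, mul_one]
      try ring
  · intro k hk hki
    simp only [mem_Icc] at hk
    unfold asepWeight
    rcases lt_or_gt_of_ne hki with hlt | hgt
    · -- k < i
      by_cases h1 : k = 1
      · subst h1
        rw [if_pos rfl, if_neg (show ¬ i ≤ 1 by omega), if_pos (show i ≤ n by omega),
          Finset.Icc_eq_empty (show ¬ n+1 ≤ n by omega),
          prod_Icc_bot' p (show 1 ≤ i - 1 by omega), Icc_self, Finset.prod_singleton]
        simp only [Finset.prod_empty, Finset.prod_singleton, one_mul, mul_one]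
        try ring
      · rw [if_neg h1, if_neg (show ¬ i ≤ k by omega), if_neg (show ¬ i ≤ k - 1 by omega),
          show k - 1 + 1 = k from by omega,
          prod_Icc_split' q (le_refl 1) (show 1 ≤ k by omega) (le_refl k),
          Finset.Icc_eq_empty (show ¬ k+1 ≤ k by omega),
          prod_Icc_bot' p (show k ≤ i - 1 by omega)]
        simp only [Finset.prod_empty, Finset.prod_singleton, one_mul, mul_one]
        try ring
    · -- k > i
      rw [if_neg (show k ≠ 1 by omega), if_pos (show i ≤ k by omega),
        if_pos (show i ≤ k - 1 by omega),
        show k - 1 + 1 = k from by omega,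
        prod_Icc_split' q (show 1 ≤ i+1 by omega) (show i+1 ≤ k by omega) (le_refl k),
        Finset.Icc_eq_empty (show ¬ k+1 ≤ k by omega),
        prod_Icc_bot' p (show k ≤ n by omega)]
      simp only [Finset.prod_empty, Finset.prod_singleton, one_mul, mul_one]
      try ring
end
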